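/- arXiv:1202.3808 — 2 statements merged into one kernel-verified Lean document; each statement's English description precedes it below -/
import Mathlib

section
/- There are no positive integers x, y with 4x⁴ + y⁴ a perfect square. -/
private lemma sq_of_pos_aux12 {m : ℤ} (h : 0 < m) (u : ℤ) (hu : m = u ^ 2 ∨ m = -u ^ 2) :
    m = u ^ 2 := by
  rcases hu with h1 | h1
  · exact h1
  · exfalso; nlinarith [sq_nonneg u]

private lemma abs_lt_aux12 {u v w : ℤ} (hu : u ≠ 0) (hv : v ≠ 0)
    (hw : w = u ^ 4 + v ^ 4) : |u| < w := by
  have h1 : 1 ≤ |u| := Int.one_le_abs (by exact_mod_cast hu)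
  have h2 : 0 < v ^ 4 := by positivity
  have h3 : |u| ≤ u ^ 2 := by nlinarith [sq_abs u]
  have h4 : u ^ 2 ≤ u ^ 4 := by nlinarith [sq_nonneg u, sq_nonneg (u ^ 2 - 1)]
  linarith

private lemma pos_right_aux12 {m n c : ℤ} (hm : 0 < m) (hc : 0 < c) (h : m * n = c) :
    0 < n := by
  rcases mul_pos_iff.mp (h ▸ hc) with h1 | h1
  · exact h1.2
  · linarith [h1.1]

private lemma descent : ∀ N : ℕ, ∀ x y z : ℤ, x ≠ 0 → y ≠ 0 → z.natAbs = N →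
    4 * x ^ 4 + y ^ 4 = z ^ 2 → False := by
  intro N
  induction N using Nat.strong_induction_on with
  | _ N ih =>
  intro x y z hx hy hN heq
  have hx4 : 0 < x ^ 4 := by positivity
  have hy4 : 0 < y ^ 4 := by positivity
  have hz : z ≠ 0 := by rintro rfl; nlinarith
  -- Step 1: reduce to the case gcd x y = 1
  by_cases hg1 : 1 < Int.gcd x y
  · obtain ⟨x1, hx1⟩ : ((Int.gcd x y : ℤ)) ∣ x := Int.gcd_dvd_left x y
    obtain ⟨y1, hy1⟩ : ((Int.gcd x y : ℤ)) ∣ y := Int.gcd_dvd_right x y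
    set g : ℤ := (Int.gcd x y : ℤ) with hgdef
    have hgz : (1:ℤ) < g := by rw [hgdef]; exact_mod_cast hg1
    have hw : g ^ 4 * (4 * x1 ^ 4 + y1 ^ 4) = z ^ 2 := by
      rw [hx1, hy1] at heq; linear_combination heq
    have hdz : g ^ 2 ∣ z := by
      rw [← Int.pow_dvd_pow_iff (two_ne_zero)]
      exact ⟨4 * x1 ^ 4 + y1 ^ 4, by linear_combination -hw⟩
    obtain ⟨z1, hz1⟩ := hdz
    have hg0 : g ≠ 0 := by linarith
    have hw2 : 4 * x1 ^ 4 + y1 ^ 4 = z1 ^ 2 := by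
      have h4 : g ^ 4 ≠ 0 := pow_ne_zero _ hg0
      apply mul_left_cancel₀ h4
      rw [hw, hz1]; ring
    have hz1ne : z1 ≠ 0 := by rintro rfl; simp at hz1; exact hz hz1
    refine ih z1.natAbs ?_ x1 y1 z1 ?_ ?_ rfl hw2
    · rw [← hN, hz1, Int.natAbs_mul, Int.natAbs_pow]
      have h1 : 1 ≤ z1.natAbs := Nat.one_le_iff_ne_zero.mpr (Int.natAbs_ne_zero.mpr hz1ne)
      have h2 : 2 ≤ g.natAbs := by rw [hgdef, Int.natAbs_natCast]; omega
      have h3 : 4 ≤ g.natAbs ^ 2 := by nlinarith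
      have h4 := Nat.mul_le_mul_right z1.natAbs h3
      linarith
    · rintro rfl; rw [mul_zero] at hx1; exact hx hx1
    · rintro rfl; rw [mul_zero] at hy1; exact hy hy1
  · have hg : Int.gcd x y = 1 := by
      have := Int.gcd_pos_of_ne_zero_left y hx
      omega
    rcases Int.even_or_odd y with hye | hyo
    · -- y even: divide equation by 4, swap roles
      obtain ⟨y1, rfl⟩ := hye
      have hy1 : y1 ≠ 0 := by rintro rfl; simp at hy
      have hze : Even z := by
        have h2 : Even (z ^ 2) := ⟨2 * x ^ 4 + 8 * y1 ^ 4, by linear_combination -heq⟩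
        exact (Int.even_pow.mp h2).1
      obtain ⟨z1, rfl⟩ := hze
      have hz1 : z1 ≠ 0 := by rintro rfl; simp at hz
      have heq2 : 4 * y1 ^ 4 + x ^ 4 = z1 ^ 2 := by
        have h4 : (4:ℤ) * (4 * y1 ^ 4 + x ^ 4) = 4 * z1 ^ 2 := by linear_combination heq
        exact mul_left_cancel₀ (by norm_num) h4
      refine ih z1.natAbs ?_ y1 x z1 hy1 hx rfl heq2
      rw [← hN]
      have : (z1 + z1).natAbs = 2 * z1.natAbs := by
        rw [← two_mul, Int.natAbs_mul]; rfl
      rw [this]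
      have := Int.natAbs_ne_zero.mpr hz1
      omega
    · -- y odd: the heart of the descent
      have hz0 : 0 < |z| := abs_pos.mpr hz
      set w := |z| with hw
      have hww : w * w = z * z := abs_mul_abs_self z
      have hco : IsCoprime y x := by
        rw [Int.isCoprime_iff_gcd_eq_one, Int.gcd_comm]; exact hg
      have hco2 : IsCoprime y 2 := by
        obtain ⟨k, hk⟩ := hyo
        exact ⟨1, -k, by rw [hk]; ring⟩
      have hcoY : IsCoprime (y ^ 2) (2 * x ^ 2) :=
        (hco2.mul_right (hco.pow_right)).pow_left
      have hgcd1 : Int.gcd (y ^ 2) (2 * x ^ 2) = 1 :=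
        Int.isCoprime_iff_gcd_eq_one.mp hcoY
      have ht : PythagoreanTriple (y ^ 2) (2 * x ^ 2) w := by
        show y ^ 2 * y ^ 2 + 2 * x ^ 2 * (2 * x ^ 2) = w * w
        rw [hww]; linear_combination heq
      obtain ⟨m, n, hm1, hm2, hm3, hm4, hm5, hm6⟩ :=
        ht.coprime_classification' hgcd1 (Int.odd_iff.mp (hyo.pow)) hz0
      have hx2 : (0:ℤ) < x ^ 2 := by positivity
      have hmn : m * n = x ^ 2 := by linarith
      have hmpos : 0 < m := by
        rcases lt_or_eq_of_le hm6 with h | h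
        · exact h
        · exfalso
          have : (0:ℤ) = x ^ 2 := by rw [← hmn, ← h]; ring
          linarith
      have hnpos : 0 < n := pos_right_aux12 hmpos hx2 hmn
      -- parity: m must be odd, n even
      rcases hm5 with ⟨hme, hno⟩ | ⟨hmo, hne⟩
      · exfalso
        obtain ⟨m1, hmm⟩ := Int.dvd_of_emod_eq_zero hme
        obtain ⟨n1, hnn⟩ := Int.odd_iff.mpr hno
        obtain ⟨k, hk⟩ := hyo
        subst hmm hnn hk
        have hcon : 4 * (k ^ 2 + k + n1 ^ 2 + n1) + 2 = 4 * m1 ^ 2 := by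
          linear_combination hm1
        have h2 : (2:ℤ) ∣ 1 := ⟨m1 ^ 2 - (k ^ 2 + k + n1 ^ 2 + n1), by linarith⟩
        norm_num at h2
      -- m and n are squares
      have hcmn : IsCoprime m n := Int.isCoprime_iff_gcd_eq_one.mpr hm4
      obtain ⟨u0, hu0⟩ := Int.sq_of_isCoprime hcmn hmn
      have hmsq : m = u0 ^ 2 := sq_of_pos_aux12 hmpos u0 hu0
      obtain ⟨v0, hv0⟩ := Int.sq_of_isCoprime hcmn.symm (by rw [mul_comm]; exact hmn)
      have hnsq : n = v0 ^ 2 := sq_of_pos_aux12 hnpos v0 hv0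
      have hu0ne : u0 ≠ 0 := by rintro rfl; simp at hmsq; omega
      have hv0ne : v0 ≠ 0 := by rintro rfl; simp at hnsq; omega
      -- second Pythagorean triple : y^2 + (v0^2)^2 = (u0^2)^2
      have ht2 : PythagoreanTriple y (v0 ^ 2) (u0 ^ 2) := by
        show y * y + v0 ^ 2 * v0 ^ 2 = u0 ^ 2 * (u0 ^ 2)
        rw [← hmsq, ← hnsq]; linear_combination hm1
      have hc2 : IsCoprime (y ^ 2) n := by
        have c1 : IsCoprime (m ^ 2) n := hcmn.pow_left
        have e : y ^ 2 = m ^ 2 + n * (-n) := by linear_combination hm1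
        rw [e]; exact c1.add_mul_left_left (-n)
      have hc3 : IsCoprime y (v0 ^ 2) := by
        rw [hnsq] at hc2
        exact (IsCoprime.pow_left_iff two_pos).mp hc2
      have hgcd2 : Int.gcd y (v0 ^ 2) = 1 := Int.isCoprime_iff_gcd_eq_one.mp hc3
      have hu2pos : (0:ℤ) < u0 ^ 2 := by positivity
      obtain ⟨s, t, hs1, hs2, hs3, hs4, hs5, hs6⟩ :=
        ht2.coprime_classification' hgcd2 (Int.odd_iff.mp hyo) hu2pos
      -- v0 is even
      have hv0even : Even v0 := by
        have : Even (v0 ^ 2) := by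
          rw [← hnsq]; exact Int.even_iff.mpr hne
        exact (Int.even_pow.mp this).1
      obtain ⟨v1, hv1⟩ := hv0even
      have hv1ne : v1 ≠ 0 := by rintro rfl; simp at hv1; exact hv0ne hv1
      have hst2 : 2 * (s * t) = 4 * v1 ^ 2 := by
        rw [hv1] at hs2; linear_combination -hs2
      have hst : s * t = 2 * v1 ^ 2 := by linarith
      have hv12 : (0:ℤ) < v1 ^ 2 := by positivity
      have hspos : 0 < s := by
        rcases lt_or_eq_of_le hs6 with h | h
        · exact h
        · exfalso
          have : (0:ℤ) = 2 * v1 ^ 2 := by rw [← hst, ← h]; ring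
          linarith
      have htpos : 0 < t := pos_right_aux12 hspos (by positivity) hst
      have hcst : IsCoprime s t := Int.isCoprime_iff_gcd_eq_one.mpr hs4
      -- size bound for the descent
      have husize : u0.natAbs < N := by
        rw [← hN]
        have h1 : |u0| < w :=
          abs_lt_aux12 hu0ne hv0ne (by rw [hm3, hmsq, hnsq]; ring)
        have e1 : (u0.natAbs : ℤ) = |u0| := (Int.abs_eq_natAbs u0).symm
        have e2 : (z.natAbs : ℤ) = |z| := (Int.abs_eq_natAbs z).symm
        have : (u0.natAbs : ℤ) < (z.natAbs : ℤ) := by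
          rw [e1, e2, ← hw]; exact h1
        exact_mod_cast this
      rcases hs5 with ⟨hse, hto⟩ | ⟨hso, hte⟩
      · -- s even, t odd
        obtain ⟨s1, hss⟩ := Int.dvd_of_emod_eq_zero hse
        have hs1t : s1 * t = v1 ^ 2 := by
          apply mul_left_cancel₀ (two_ne_zero (α := ℤ))
          rw [hss] at hst; linear_combination hst
        have hs1pos : 0 < s1 := by
          rw [hss] at hspos; linarith
        have hcs1t : IsCoprime s1 t := hcst.of_isCoprime_of_dvd_left ⟨2, by rw [hss]; ring⟩
        obtain ⟨a, ha⟩ := Int.sq_of_isCoprime hcs1t hs1t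
        have hasq : s1 = a ^ 2 := sq_of_pos_aux12 hs1pos a ha
        obtain ⟨b, hb⟩ := Int.sq_of_isCoprime hcs1t.symm (by rw [mul_comm]; exact hs1t)
        have hbsq : t = b ^ 2 := sq_of_pos_aux12 htpos b hb
        have hane : a ≠ 0 := by rintro rfl; simp at hasq; omega
        have hbne : b ≠ 0 := by rintro rfl; simp at hbsq; omega
        have heq' : 4 * a ^ 4 + b ^ 4 = u0 ^ 2 := by
          rw [hss, hasq, hbsq] at hs3; linear_combination -hs3
        exact ih u0.natAbs husize a b u0 hane hbne rfl heq'
      · -- s odd, t even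
        obtain ⟨t1, htt⟩ := Int.dvd_of_emod_eq_zero hte
        have hs1t : t1 * s = v1 ^ 2 := by
          apply mul_left_cancel₀ (two_ne_zero (α := ℤ))
          rw [htt] at hst; linear_combination hst
        have ht1pos : 0 < t1 := by
          rw [htt] at htpos; linarith
        have hct1s : IsCoprime t1 s := (hcst.symm).of_isCoprime_of_dvd_left ⟨2, by rw [htt]; ring⟩
        obtain ⟨b, hb⟩ := Int.sq_of_isCoprime hct1s hs1t
        have hbsq : t1 = b ^ 2 := sq_of_pos_aux12 ht1pos b hb
        obtain ⟨a, ha⟩ := Int.sq_of_isCoprime hct1s.symm (by rw [mul_comm]; exact hs1t)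
        have hasq : s = a ^ 2 := sq_of_pos_aux12 hspos a ha
        have hane : a ≠ 0 := by rintro rfl; simp at hasq; omega
        have hbne : b ≠ 0 := by rintro rfl; simp at hbsq; omega
        have heq' : 4 * b ^ 4 + a ^ 4 = u0 ^ 2 := by
          rw [htt, hasq, hbsq] at hs3; linear_combination -hs3
        exact ih u0.natAbs husize b a u0 hbne hane rfl heq'

theorem stmt_12 (x y : ℕ) (hx : 0 < x) (hy : 0 < y) :
    ¬ IsSquare (4 * x ^ 4 + y ^ 4) := by
  rintro ⟨r, hr⟩
  have h : 4 * (x:ℤ) ^ 4 + (y:ℤ) ^ 4 = (r:ℤ) ^ 2 := by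
    have := congrArg (fun n : ℕ => (n : ℤ)) hr
    push_cast at this
    linarith [this]
  exact descent (r:ℤ).natAbs x y r (by exact_mod_cast hx.ne') (by exact_mod_cast hy.ne') rfl h
end

section
/- For positive integers a, b (not both reducible to the excluded trivial case), a⁴ - 6a²b² + b⁴ is never a perfect square when it is positive. -/
lemma natAbs_lt_of_sq_lt {m x : ℤ} (h : m^2 < x^2) : m.natAbs < x.natAbs := by
  have h2 : |m| < |x| := by
    rwa [← sq_abs m, ← sq_abs x, pow_lt_pow_iff_left₀ (abs_nonneg m) (abs_nonneg x) (by norm_num)] at h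
  rw [Int.abs_eq_natAbs, Int.abs_eq_natAbs] at h2
  exact_mod_cast h2

lemma natAbs_pow4 (m : ℤ) : ((m.natAbs : ℤ))^4 = m^4 := by
  rw [show (4:ℕ) = 2*2 from rfl, pow_mul, pow_mul]
  norm_num [Int.natAbs_sq, sq_abs]

lemma coprime_two_of_odd {n : ℤ} (h : n % 2 = 1) : IsCoprime (2:ℤ) n := by
  obtain ⟨t, ht⟩ : ∃ t, n = 2*t+1 := ⟨n/2, by omega⟩
  exact ⟨-t, 1, by rw [ht]; ring⟩

set_option maxHeartbeats 800000 in
lemma innerB (x : ℕ)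
    (IH : ∀ m : ℕ, m < x → ∀ y z : ℤ, y ≠ 0 → z ≠ 0 → y ^ 4 + z ^ 2 ≠ (m:ℤ)^4)
    (A B s u : ℤ) (hA : 0 < A) (hB : 0 < B) (hcop : Int.gcd A B = 1)
    (hAodd : A % 2 = 1) (hAs : A = s^2) (hBu : 2*B = u^2)
    (hABx : A^2 + B^2 = (x:ℤ)^2) : False := by
  have hxpos : 0 < (x:ℤ) := by
    rcases Nat.eq_zero_or_pos x with h0 | h0
    · exfalso; subst h0; norm_num at hABx; nlinarith
    · exact_mod_cast h0
  have htri : PythagoreanTriple A B (x:ℤ) := by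
    unfold PythagoreanTriple; linear_combination hABx
  obtain ⟨p, q, hA', hB', hx', hpq, _, hp0⟩ :=
    htri.coprime_classification' hcop hAodd hxpos
  have hpqpos : 0 < p * q := by linarith [hB, hB']
  have hp : 0 < p := lt_of_le_of_ne hp0 (by rintro rfl; simp at hpqpos)
  have hq : 0 < q := by
    rcases mul_pos_iff.mp hpqpos with h | h
    · exact h.2
    · linarith [h.1]
  have hueven : Even u := by
    have : Even (u^2) := ⟨B, by linarith⟩
    simpa [Int.even_pow] using this
  obtain ⟨w, hw⟩ := hueven
  have hpqw : p * q = w^2 := by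
    have h4 : (4:ℤ) * (p*q) = 4 * w^2 := by
      rw [hB', hw] at hBu; ring_nf at hBu ⊢; linarith
    exact mul_left_cancel₀ (by norm_num : (4:ℤ) ≠ 0) h4
  have hPQ : IsCoprime p q := Int.isCoprime_iff_gcd_eq_one.mpr hpq
  obtain ⟨e, he⟩ := Int.sq_of_isCoprime hPQ hpqw
  have heP : p = e^2 := by
    rcases he with h | h
    · exact h
    · exfalso; nlinarith [sq_nonneg e]
  obtain ⟨f, hf⟩ := Int.sq_of_isCoprime hPQ.symm
    (show q * p = w^2 by rw [mul_comm]; exact hpqw)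
  have hfQ : q = f^2 := by
    rcases hf with h | h
    · exact h
    · exfalso; nlinarith [sq_nonneg f]
  have he0 : e ≠ 0 := by rintro rfl; simp at heP; omega
  have hf0 : f ≠ 0 := by rintro rfl; simp at hfQ; omega
  have hs0 : s ≠ 0 := by rintro rfl; simp at hAs; omega
  have heq : f ^ 4 + s ^ 2 = ((e.natAbs : ℤ))^4 := by
    rw [natAbs_pow4]
    have h1 : s^2 = p^2 - q^2 := by rw [← hAs, hA']
    rw [h1, heP, hfQ]; ring
  have hlt : e.natAbs < x := by
    have h1 : (e.natAbs : ℤ) ≤ (e.natAbs : ℤ)^2 := by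
      have := Nat.le_self_pow (n := 2) (by norm_num) e.natAbs
      exact_mod_cast this
    have h2 : ((e.natAbs : ℤ))^2 = p := by
      rw [Int.natAbs_sq]; exact heP.symm
    have h3 : p < (x:ℤ) := by
      have hq1 : 1 ≤ q^2 := by nlinarith
      have hpp : p ≤ p^2 := by nlinarith
      linarith [hx']
    have : (e.natAbs : ℤ) < (x:ℤ) := by omega
    exact_mod_cast this
  exact IH e.natAbs hlt f s hf0 hs0 heq

set_option maxHeartbeats 1000000 in
lemma key : ∀ x : ℕ, ∀ y z : ℤ, y ≠ 0 → z ≠ 0 → y ^ 4 + z ^ 2 ≠ (x:ℤ)^4 := by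
  intro x
  induction x using Nat.strong_induction_on with
  | _ x IH =>
  intro y z hy hz heq
  have hx0 : x ≠ 0 := by
    rintro rfl
    have h1 : (0:ℤ) < y^4 := by positivity
    have h2 : (0:ℤ) ≤ z^2 := sq_nonneg z
    simp at heq; nlinarith
  have hxz : ((x:ℤ)) ≠ 0 := by exact_mod_cast hx0
  set g : ℕ := Int.gcd (x:ℤ) y with hgdef
  rcases Nat.lt_or_ge g 2 with hg | hg
  swap
  · -- g ≥ 2 : descend by dividing out g
    obtain ⟨x1, hx1⟩ : ((g:ℤ)) ∣ (x:ℤ) := Int.gcd_dvd_left _ _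
    obtain ⟨y1, hy1⟩ : ((g:ℤ)) ∣ y := Int.gcd_dvd_right _ _
    have hgz : ((g:ℤ)) ≠ 0 := by exact_mod_cast (by omega : g ≠ 0)
    rw [hx1, hy1] at heq
    have hdvd : ((g:ℤ)^2)^2 ∣ z^2 := ⟨x1^4 - y1^4, by linear_combination heq⟩
    obtain ⟨z1, hz1⟩ := (Int.pow_dvd_pow_iff two_ne_zero).mp hdvd
    rw [hz1] at heq
    have heq1 : y1 ^ 4 + z1 ^ 2 = x1 ^ 4 := by
      have h4 : (g:ℤ)^4 * (y1^4 + z1^2) = (g:ℤ)^4 * x1^4 := by linear_combination heq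
      exact mul_left_cancel₀ (pow_ne_zero 4 hgz) h4
    have hx1n : x = g * x1.natAbs := by
      have := congrArg Int.natAbs hx1
      simpa [Int.natAbs_mul] using this
    have hx10 : x1.natAbs ≠ 0 := by
      rintro h; rw [h, Nat.mul_zero] at hx1n; exact hx0 hx1n
    have h2x : 2 * x1.natAbs ≤ x := by
      rw [hx1n]; exact Nat.mul_le_mul_right _ hg
    have hlt : x1.natAbs < x := by omega
    have hy10 : y1 ≠ 0 := by rintro rfl; simp at hy1; exact hy hy1
    have hz10 : z1 ≠ 0 := by rintro rfl; simp at hz1; exact hz hz1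
    clear heq
    exact IH x1.natAbs hlt y1 z1 hy10 hz10 (by rw [natAbs_pow4]; exact heq1)
  · -- coprime case
    have hg1 : g = 1 := by
      rcases Nat.lt_or_ge g 1 with h | h
      · exfalso
        have h0 : g = 0 := by omega
        rw [hgdef] at h0
        exact hxz (Int.gcd_eq_zero_iff.mp h0).1
      · omega
    have hcop : IsCoprime ((x:ℤ)) y := Int.isCoprime_iff_gcd_eq_one.mpr hg1
    have hcyz : IsCoprime y z := by
      have h1 : IsCoprime y ((x:ℤ)^4) := (hcop.symm).pow_right
      have h2 : IsCoprime y ((x:ℤ)^4 + y * (-(y^3))) := h1.add_mul_left_right _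
      have h3 : ((x:ℤ)^4 + y * (-(y^3))) = z^2 := by linarith [heq]
      rw [h3] at h2
      exact h2.of_isCoprime_of_dvd_right (dvd_pow_self z two_ne_zero)
    -- x must be odd
    have hxodd : Odd ((x:ℤ)) := by
      by_contra hodd
      rw [Int.not_odd_iff_even] at hodd
      have hyodd : Odd y := by
        rcases Int.even_or_odd y with hev | hod
        · exfalso
          have h2x : (2:ℤ) ∣ (x:ℤ) := hodd.two_dvd
          have h2y : (2:ℤ) ∣ y := hev.two_dvd
          have := hcop.isUnit_of_dvd' h2x h2y
          rw [Int.isUnit_iff] at this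
          omega
        · exact hod
      obtain ⟨k, hk⟩ := hodd
      obtain ⟨j, hj⟩ := hyodd
      have h4 : ((y:ZMod 4))^4 + ((z:ZMod 4))^2 = (((x:ℤ) : ZMod 4))^4 := by
        have := congrArg (fun t : ℤ => (t : ZMod 4)) heq
        push_cast at this
        exact this
      have hx4 : (((x:ℤ)) : ZMod 4) = (k : ZMod 4) + (k : ZMod 4) := by
        rw [hk]; push_cast; ring
      have hy4 : ((y : ZMod 4)) = 2 * (j : ZMod 4) + 1 := by
        rw [hj]; push_cast; ring
      rw [hx4, hy4] at h4
      exact (by decide : ∀ u v w : ZMod 4, (2*u+1)^4 + w^2 ≠ (v+v)^4)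
        (j : ZMod 4) (k : ZMod 4) (z : ZMod 4) h4
    have hx2pos : 0 < ((x:ℤ))^2 := by positivity
    rcases Int.even_or_odd y with hyev | hyodd
    · -- y even, z odd : the deep descent case
      have hzodd : z % 2 = 1 := by
        rcases Int.even_or_odd z with hzev | hzod
        · exfalso
          have := hcyz.isUnit_of_dvd' hyev.two_dvd hzev.two_dvd
          rw [Int.isUnit_iff] at this
          omega
        · exact Int.odd_iff.mp hzod
      have htri : PythagoreanTriple z (y^2) ((x:ℤ)^2) := by
        unfold PythagoreanTriple; nlinarith [heq]
      have hgcd : Int.gcd z (y^2) = 1 :=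
        Int.isCoprime_iff_gcd_eq_one.mp ((hcyz.pow_left).symm)
      obtain ⟨m, n, hz', hy2', hx2', hmn, hpp, hm0⟩ :=
        htri.coprime_classification' hgcd hzodd hx2pos
      have hy2pos : 0 < y^2 := by
        have : y ≠ 0 := hy
        positivity
      have hmnpos : 0 < m * n := by linarith [hy2pos, hy2']
      have hm : 0 < m := lt_of_le_of_ne hm0 (by rintro rfl; simp at hmnpos)
      have hn : 0 < n := by
        rcases mul_pos_iff.mp hmnpos with h | h
        · exact h.2
        · linarith [h.1]
      have hMN : IsCoprime m n := Int.isCoprime_iff_gcd_eq_one.mpr hmn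
      rcases hpp with ⟨hme, hno⟩ | ⟨hmo, hne⟩
      · -- m even, n odd : y² = (2m)·n
        have c1 : IsCoprime (2*m) n := (coprime_two_of_odd hno).mul_left hMN
        obtain ⟨u, hu⟩ := Int.sq_of_isCoprime c1
          (show (2*m) * n = y^2 by linear_combination -hy2')
        have h2m : 2*m = u^2 := by
          rcases hu with h | h
          · exact h
          · exfalso; nlinarith [sq_nonneg u]
        obtain ⟨s, hs⟩ := Int.sq_of_isCoprime c1.symm
          (show n * (2*m) = y^2 by linear_combination -hy2')
        have hns : n = s^2 := by
          rcases hs with h | h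
          · exact h
          · exfalso; nlinarith [sq_nonneg s]
        exact innerB x IH n m s u hn hm (by rw [Int.gcd_comm]; exact hmn) hno hns h2m
          (by linear_combination -hx2')
      · -- m odd, n even : y² = m·(2n)
        have c1 : IsCoprime (2*n) m := (coprime_two_of_odd hmo).mul_left hMN.symm
        obtain ⟨u, hu⟩ := Int.sq_of_isCoprime c1
          (show (2*n) * m = y^2 by linear_combination -hy2')
        have h2n : 2*n = u^2 := by
          rcases hu with h | h
          · exact h
          · exfalso; nlinarith [sq_nonneg u]
        obtain ⟨s, hs⟩ := Int.sq_of_isCoprime c1.symm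
          (show m * (2*n) = y^2 by linear_combination -hy2')
        have hms : m = s^2 := by
          rcases hs with h | h
          · exact h
          · exfalso; nlinarith [sq_nonneg s]
        exact innerB x IH m n s u hm hn hmn hmo hms h2n (by linear_combination -hx2')
    · -- y odd : direct descent
      have hy2odd : (y^2) % 2 = 1 := Int.odd_iff.mp (hyodd.pow)
      have htri : PythagoreanTriple (y^2) z ((x:ℤ)^2) := by
        unfold PythagoreanTriple; nlinarith [heq]
      have hgcd : Int.gcd (y^2) z = 1 :=
        Int.isCoprime_iff_gcd_eq_one.mp (hcyz.pow_left)
      obtain ⟨m, n, hy2', hz', hx2', hmn, hpp, hm0⟩ :=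
        htri.coprime_classification' hgcd hy2odd hx2pos
      have hn0 : n ≠ 0 := by rintro rfl; simp at hz'; exact hz hz'
      have heq2 : n ^ 4 + (y * (x:ℤ)) ^ 2 = m ^ 4 := by
        have h1 : (y * (x:ℤ))^2 = (m^2 - n^2) * (m^2 + n^2) := by
          rw [← hy2', ← hx2']; ring
        linear_combination h1
      have hlt : m.natAbs < x := by
        have h1 : m^2 < ((x:ℤ))^2 := by nlinarith [pow_two_pos_of_ne_zero hn0, hx2']
        have := natAbs_lt_of_sq_lt h1
        simpa using this
      exact IH m.natAbs hlt n (y * (x:ℤ)) hn0 (mul_ne_zero hy hxz)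
        (by rw [natAbs_pow4]; exact heq2)

theorem stmt_15 (a b : ℤ) (ha : 0 < a) (hb : 0 < b)
    (hpos : 0 < a ^ 4 - 6 * a ^ 2 * b ^ 2 + b ^ 4) :
    ¬ IsSquare (a ^ 4 - 6 * a ^ 2 * b ^ 2 + b ^ 4) := by
  rintro ⟨c, hc⟩
  have hc0 : c ≠ 0 := by rintro rfl; simp at hc; omega
  have hv : (2*a*b) ≠ 0 := by positivity
  have hz : c * (a^2 + b^2) ≠ 0 := mul_ne_zero hc0 (by positivity)
  have heq : (2*a*b) ^ 4 + (c * (a^2 + b^2)) ^ 2 = (((a^2-b^2).natAbs : ℤ))^4 := by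
    rw [natAbs_pow4]
    linear_combination (-(a^2+b^2)^2) * hc
  exact key (a^2-b^2).natAbs (2*a*b) (c * (a^2+b^2)) hv hz heq
end
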